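/- Let n ≥ 1, let 0 < p < 1, let 0 < ε < 1, and set p₀ = pε + (1−ε)/2^n. Then the mutual information I = h(p) − p₀ · h((p/p₀)(ε + (1−ε)/2^n)) − (1−p₀) · h((p(1−ε)/(1−p₀))(1 − 1/2^n)) is strictly positive. (This is the information about whether the Deutsch–Jozsa function is constant or balanced gained from one quantum query with an unentangled pseudo-pure state: it is positive for every ε > 0, whereas a single classical query gives zero information.) -/
import Mathlib


/-- The binary entropy function `h(q) = -q log₂ q - (1-q) log₂ (1-q)`
(with `0 log₂ 0 = 0`, which holds by the junk-value convention `Real.logb 2 0 = 0`). -/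
noncomputable def binEntropy (q : ℝ) : ℝ :=
  -q * Real.logb 2 q - (1 - q) * Real.logb 2 (1 - q)

lemma binEntropy_eq (q : ℝ) : binEntropy q = Real.binEntropy q / Real.log 2 := by
  simp only [binEntropy, Real.binEntropy, Real.logb, Real.log_inv]
  ring

/-- The information about whether the Deutsch–Jozsa function is constant or balanced
gained from one quantum query with an unentangled pseudo-pure state of purity `ε > 0`
is strictly positive, for every a priori probability `0 < p < 1` of a constant function.
Here `p₀ = pε + (1-ε)/2^n` is the probability of measuring outcome `z = 0`. -/
theorem dj_pps_mutual_information_pos (n : ℕ) (hn : 1 ≤ n) (p ε : ℝ)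
    (hp0 : 0 < p) (hp1 : p < 1) (hε0 : 0 < ε) (hε1 : ε < 1) (p₀ : ℝ)
    (hp₀ : p₀ = p * ε + (1 - ε) / 2 ^ n) :
    0 < binEntropy p
        - p₀ * binEntropy (p / p₀ * (ε + (1 - ε) / 2 ^ n))
        - (1 - p₀) * binEntropy (p * (1 - ε) / (1 - p₀) * (1 - 1 / 2 ^ n)) := by
  set T : ℝ := 2 ^ n with hTdef
  have hT : (2 : ℝ) ≤ T := by
    calc (2:ℝ) = 2 ^ 1 := by norm_num
    _ ≤ 2 ^ n := pow_le_pow_right₀ (by norm_num) hn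
  have hT0 : (0 : ℝ) < T := by linarith
  have hε' : (0 : ℝ) < 1 - ε := by linarith
  have hd0 : (0 : ℝ) < (1 - ε) / T := div_pos hε' hT0
  have hp₀pos : 0 < p₀ := by rw [hp₀]; positivity
  have hd1 : (1 - ε) / T < 1 - ε := by
    rw [div_lt_iff₀ hT0]; nlinarith
  have hp₀1 : p₀ < 1 := by
    rw [hp₀]; nlinarith
  have h1p₀ : 0 < 1 - p₀ := by linarith
  have hx0 : (0 : ℝ) < 1 / T := by positivity
  have hx1 : 1 / T ≤ 1 := by rw [div_le_one hT0]; linarith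
  set q₁ : ℝ := p / p₀ * (ε + (1 - ε) / T) with hq₁def
  set q₂ : ℝ := p * (1 - ε) / (1 - p₀) * (1 - 1 / T) with hq₂def
  have hq₁0 : 0 ≤ q₁ := by
    apply mul_nonneg (div_nonneg hp0.le hp₀pos.le); linarith
  have hq₁1 : q₁ ≤ 1 := by
    rw [hq₁def, div_mul_eq_mul_div, div_le_one hp₀pos, hp₀]
    nlinarith
  have hq₂0 : 0 ≤ q₂ := by
    apply mul_nonneg (div_nonneg (by nlinarith) h1p₀.le); linarith
  have hq₂1 : q₂ ≤ 1 := by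
    rw [hq₂def, div_mul_eq_mul_div, div_le_one h1p₀, hp₀]
    have e1 : (1 - ε) / T = (1 - ε) * (1 / T) := by ring
    rw [e1]
    nlinarith [mul_nonneg (mul_nonneg (by linarith : (0:ℝ) ≤ 1 - p) hε'.le) hx0.le,
      mul_nonneg hε'.le hx0.le]
  have hcombo : p₀ * q₁ + (1 - p₀) * q₂ = p := by
    rw [hq₁def, hq₂def]
    field_simp
    ring
  have hq₁gt : p < q₁ := by
    rw [hq₁def, div_mul_eq_mul_div, lt_div_iff₀ hp₀pos, hp₀]
    nlinarith [mul_pos (mul_pos hp0 hε0) (sub_pos.mpr hp1)]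
  have hq₂lt : q₂ < p := by nlinarith
  have hne : q₁ ≠ q₂ := by intro h; rw [h] at hq₁gt; linarith
  have key := Real.strictConcave_binEntropy.2
    (Set.mem_Icc.mpr ⟨hq₁0, hq₁1⟩) (Set.mem_Icc.mpr ⟨hq₂0, hq₂1⟩) hne hp₀pos h1p₀
    (by ring)
  simp only [smul_eq_mul] at key
  rw [hcombo] at key
  rw [binEntropy_eq, binEntropy_eq, binEntropy_eq]
  have hL : (0 : ℝ) < Real.log 2 := Real.log_pos (by norm_num)
  have heq : Real.binEntropy p / Real.log 2
      - p₀ * (Real.binEntropy q₁ / Real.log 2)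
      - (1 - p₀) * (Real.binEntropy q₂ / Real.log 2)
      = (Real.binEntropy p - (p₀ * Real.binEntropy q₁ + (1 - p₀) * Real.binEntropy q₂))
        / Real.log 2 := by ring
  rw [heq]
  exact div_pos (by linarith) hL
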